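/- Let n ≥ 1, let q_1, …, q_n be positive integers with ∑_{i=1}^n q_i = 2Q, let k be an integer with 1 ≤ k ≤ n, and let N be an integer with 2^{N−1} > 2^n·Q + k. Then for every subset T ⊆ {1, …, n}, writing s = ∑_{i∈T} q_i and t = |T|: if (2^N − 2^n·Q − k) + 2^n·s + t equals 2^m for some natural number m, then m = N, s = Q, and t = k. -/

import Mathlib

/-- In the PARTITION reduction, if the exposed length of the main interval after the
dummy interval, i.e. `(2^N - 2^n·Q - k) + 2^n·s + t` with `s = ∑_{i ∈ T} q_i` and
`t = |T|`, is a power of two `2^m`, then necessarily `m = N`, `s = Q` and `t = k`. -/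
theorem stmt_16 (n Q k N : ℕ) (hn : 1 ≤ n) (q : Fin n → ℕ) (hq : ∀ i, 0 < q i)
    (hQ : ∑ i, q i = 2 * Q) (hk1 : 1 ≤ k) (hkn : k ≤ n)
    (hN : 2 ^ n * Q + k < 2 ^ (N - 1)) :
    ∀ T : Finset (Fin n), ∀ m : ℕ,
      (2 ^ N - 2 ^ n * Q - k) + 2 ^ n * (∑ i ∈ T, q i) + T.card = 2 ^ m →
      m = N ∧ (∑ i ∈ T, q i) = Q ∧ T.card = k := by
  intro T m h
  set s := ∑ i ∈ T, q i with hs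
  set t := T.card with ht
  -- basic facts
  have hn2 : n < 2 ^ n := Nat.lt_two_pow_self
  have hQ1 : 1 ≤ Q := by
    have h1 : 1 ≤ ∑ i : Fin n, q i := by
      have : 0 < ∑ i : Fin n, q i :=
        Finset.sum_pos (fun i _ => hq i) (by simp [Finset.univ_nonempty_iff]; exact Fin.pos_iff_nonempty.mp hn)
      omega
    omega
  have hsle : s ≤ 2 * Q := by
    rw [← hQ]
    exact Finset.sum_le_sum_of_subset (Finset.subset_univ T)
  have htn : t ≤ n := by
    rw [ht]
    simpa using Finset.card_le_univ T
  have hN1 : 1 ≤ N := by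
    by_contra hc
    interval_cases N <;> simp_all
  have h2N : 2 ^ N = 2 * 2 ^ (N - 1) := by
    conv_lhs => rw [show N = (N - 1) + 1 by omega]
    ring
  have hQN : 2 ^ n * Q + k ≤ 2 ^ N := by omega
  have hQn2 : (2:ℕ) ^ n ≤ 2 ^ n * Q := Nat.le_mul_of_pos_right _ hQ1
  -- cast the hypothesis to ℤ
  have hsub1 : 2 ^ n * Q ≤ 2 ^ N := by omega
  have hsub2 : k ≤ 2 ^ N - 2 ^ n * Q := by omega
  have hz : (2:ℤ) ^ N - 2 ^ n * Q - k + 2 ^ n * s + t = 2 ^ m := by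
    have := congrArg (fun x : ℕ => (x : ℤ)) h
    push_cast [Nat.cast_sub hsub1, Nat.cast_sub hsub2] at this
    linarith [this]
  -- bounds on 2^m
  have hb1 : (2:ℕ) ^ (N - 1) < 2 ^ m := by
    have : (2:ℤ) ^ (N-1) < 2 ^ m := by
      have hc : ((2:ℕ)^N : ℤ) = 2 * ((2:ℕ)^(N-1) : ℤ) := by exact_mod_cast h2N
      have hc2 : ((2:ℕ)^n * Q + k : ℤ) < ((2:ℕ)^(N-1) : ℤ) := by exact_mod_cast hN
      push_cast at hc hc2 ⊢
      nlinarith [hz, mul_nonneg (pow_nonneg (by norm_num : (0:ℤ) ≤ 2) n) (Int.ofNat_nonneg s), Int.ofNat_nonneg t]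
    exact_mod_cast this
  have hb2 : (2:ℕ) ^ m < 2 ^ (N + 1) := by
    have hsz : (2:ℤ) ^ n * s ≤ 2 ^ n * (2 * Q) := by
      have : (s:ℤ) ≤ 2 * Q := by exact_mod_cast hsle
      have hp : (0:ℤ) ≤ 2 ^ n := pow_nonneg (by norm_num) n
      nlinarith
    have hc : ((2:ℕ)^N : ℤ) = 2 * ((2:ℕ)^(N-1) : ℤ) := by exact_mod_cast h2N
    have hc2 : (2:ℤ)^n * Q + k < (2:ℤ)^(N-1) := by exact_mod_cast hN
    have htz : (t:ℤ) ≤ n := by exact_mod_cast htn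
    have hn2z : (n:ℤ) < 2 ^ n := by exact_mod_cast hn2
    have hQ1z : (1:ℤ) ≤ Q := by exact_mod_cast hQ1
    have hkz : (1:ℤ) ≤ k := by exact_mod_cast hk1
    have hQn2z : (2:ℤ) ^ n ≤ 2 ^ n * Q := by exact_mod_cast hQn2
    have hN1z : (2:ℤ) ^ N = 2 * 2 ^ (N - 1) := by exact_mod_cast h2N
    have : (2:ℤ) ^ m < 2 ^ (N + 1) := by
      have hpow : (2:ℤ) ^ (N + 1) = 2 * 2 ^ N := by ring
      rw [hpow]
      linarith [hz]
    exact_mod_cast this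
  have hm : m = N := by
    have h1 : N - 1 < m := (Nat.pow_lt_pow_iff_right (by norm_num)).mp hb1
    have h2 : m < N + 1 := (Nat.pow_lt_pow_iff_right (by norm_num)).mp hb2
    omega
  subst hm
  -- derive 2^n * s + t = 2^n * Q + k
  have key : 2 ^ n * s + t = 2 ^ n * Q + k := by
    have : (2:ℤ) ^ n * s + t = 2 ^ n * Q + k := by linarith [hz]
    exact_mod_cast this
  have hsQ : s = Q := by
    have h1 : s < Q + 1 := by
      have : 2 ^ n * s < 2 ^ n * (Q + 1) := by
        have : 2 ^ n * s ≤ 2 ^ n * Q + k := by omega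
        calc 2 ^ n * s ≤ 2 ^ n * Q + k := this
          _ < 2 ^ n * Q + 2 ^ n := by omega
          _ = 2 ^ n * (Q + 1) := by ring
      exact Nat.lt_of_mul_lt_mul_left this
    have h2 : Q < s + 1 := by
      have : 2 ^ n * Q < 2 ^ n * (s + 1) := by
        calc 2 ^ n * Q ≤ 2 ^ n * s + t := by omega
          _ < 2 ^ n * s + 2 ^ n := by omega
          _ = 2 ^ n * (s + 1) := by ring
      exact Nat.lt_of_mul_lt_mul_left this
    omega
  refine ⟨rfl, hsQ, ?_⟩
  rw [hsQ] at key
  omega
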